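/- arXiv:1812.05025 — 8 statements merged into one kernel-verified Lean document; each statement's English description precedes it below -/
import Mathlib

section
/- Let K be a compact Hausdorff space and X a Banach space, and let m : C(K) → L(X) be a contractive unital algebra homomorphism. If a, b ∈ C(K) satisfy |a| ≤ |b| pointwise, then ‖m(a)x‖ ≤ ‖m(b)x‖ for every x ∈ X. -/
open Filter Topology

theorem stmt0 {K X : Type*} [TopologicalSpace K] [CompactSpace K] [T2Space K]
    [NormedAddCommGroup X] [NormedSpace ℝ X] [CompleteSpace X]
    (m : C(K, ℝ) →ₐ[ℝ] (X →L[ℝ] X))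
    (hm : ∀ a : C(K, ℝ), ‖m a‖ ≤ ‖a‖)
    (a b : C(K, ℝ)) (hab : ∀ k, |a k| ≤ |b k|) (x : X) :
    ‖m a x‖ ≤ ‖m b x‖ := by
  have key : ∀ ε : ℝ, 0 < ε → ‖m a x‖ ≤ ‖m b x‖ + Real.sqrt ε / 2 * ‖x‖ := by
    intro ε hε
    have hpos : ∀ k, (0:ℝ) < b k ^ 2 + ε := fun k => by positivity
    set c : C(K, ℝ) := ⟨fun k => a k * b k / (b k ^ 2 + ε),
      (a.continuous.mul b.continuous).div
        ((b.continuous.pow 2).add continuous_const) (fun k => (hpos k).ne')⟩ with hc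
    have hck : ∀ k, c k = a k * b k / (b k ^ 2 + ε) := fun k => rfl
    have hc1 : ‖c‖ ≤ 1 := by
      rw [ContinuousMap.norm_le _ zero_le_one]
      intro k
      rw [Real.norm_eq_abs, hck, abs_div, abs_of_pos (hpos k)]
      rw [div_le_one (hpos k)]
      calc |a k * b k| = |a k| * |b k| := abs_mul _ _
        _ ≤ |b k| * |b k| := by nlinarith [hab k, abs_nonneg (a k), abs_nonneg (b k)]
        _ ≤ b k ^ 2 + ε := by nlinarith [sq_abs (b k)]
    have hc2 : ‖a - c * b‖ ≤ Real.sqrt ε / 2 := by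
      have hsq : Real.sqrt ε ^ 2 = ε := Real.sq_sqrt hε.le
      have hsnn : 0 ≤ Real.sqrt ε := Real.sqrt_nonneg ε
      rw [ContinuousMap.norm_le _ (by positivity)]
      intro k
      have : (a - c * b) k = a k * ε / (b k ^ 2 + ε) := by
        simp only [ContinuousMap.sub_apply, ContinuousMap.mul_apply, hck]
        field_simp
        ring
      rw [Real.norm_eq_abs, this, abs_div, abs_of_pos (hpos k), abs_mul,
        abs_of_pos hε, div_le_iff₀ (hpos k)]
      have h1 : |a k| ≤ |b k| := hab k
      have h2 : 2 * |b k| * Real.sqrt ε ≤ b k ^ 2 + ε := by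
        nlinarith [sq_nonneg (|b k| - Real.sqrt ε), sq_abs (b k)]
      nlinarith [abs_nonneg (a k), abs_nonneg (b k), mul_le_mul_of_nonneg_right h1 hε.le]
    have hsplit : m a x = m (a - c * b) x + (m c) ((m b) x) := by
      have h := congrArg (fun f : X →L[ℝ] X => f x) (map_sub m a (c * b))
      simp only [ContinuousLinearMap.sub_apply, map_mul,
        ContinuousLinearMap.mul_apply] at h
      exact sub_eq_iff_eq_add.mp h.symm
    calc ‖m a x‖ = ‖m (a - c * b) x + (m c) ((m b) x)‖ := by rw [hsplit]
      _ ≤ ‖m (a - c * b) x‖ + ‖(m c) ((m b) x)‖ := norm_add_le _ _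
      _ ≤ ‖a - c * b‖ * ‖x‖ + ‖c‖ * ‖m b x‖ := by
          gcongr
          · exact ((m (a - c*b)).le_opNorm x).trans
              (mul_le_mul_of_nonneg_right (hm _) (norm_nonneg x))
          · exact ((m c).le_opNorm _).trans
              (mul_le_mul_of_nonneg_right (hm _) (norm_nonneg _))
      _ ≤ Real.sqrt ε / 2 * ‖x‖ + 1 * ‖m b x‖ := by gcongr
      _ = ‖m b x‖ + Real.sqrt ε / 2 * ‖x‖ := by ring
  refine le_of_forall_pos_le_add fun δ hδ => ?_
  have hx1 : (0:ℝ) < ‖x‖ + 1 := by positivity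
  have hε : (0:ℝ) < (δ / (‖x‖ + 1)) ^ 2 := by positivity
  have h := key _ hε
  rw [Real.sqrt_sq (by positivity)] at h
  refine h.trans ?_
  have : δ / (‖x‖ + 1) / 2 * ‖x‖ ≤ δ := by
    rw [div_div]
    rw [div_mul_eq_mul_div, div_le_iff₀ (by positivity)]
    nlinarith [norm_nonneg x, hδ.le]
  linarith
end

section
/- Let K be a compact Hausdorff space and X a Banach space, and let m : C(K) → L(X) be a contractive unital algebra homomorphism. If m is injective, then m is an isometry, i.e. ‖m(a)‖ = ‖a‖ for all a ∈ C(K). -/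
open Filter Topology Set

theorem stmt1 {K X : Type*} [TopologicalSpace K] [CompactSpace K] [T2Space K]
    [NormedAddCommGroup X] [NormedSpace ℝ X] [CompleteSpace X]
    (m : C(K, ℝ) →ₐ[ℝ] (X →L[ℝ] X))
    (hm : ∀ a : C(K, ℝ), ‖m a‖ ≤ ‖a‖)
    (hinj : Function.Injective m) :
    ∀ a : C(K, ℝ), ‖m a‖ = ‖a‖ := by
  intro a
  rcases subsingleton_or_nontrivial X with hX | hX
  · -- X trivial: then m injective forces C(K,ℝ) trivial, so a = 0.
    have : Subsingleton (X →L[ℝ] X) := inferInstance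
    have : Subsingleton C(K, ℝ) := ⟨fun f g => hinj (Subsingleton.elim _ _)⟩
    rw [Subsingleton.elim a 0, map_zero, norm_zero, norm_zero]
  rcases isEmpty_or_nonempty K with hK | hK
  · haveI : Subsingleton C(K, ℝ) := ⟨fun f g => ContinuousMap.ext fun x => hK.elim x⟩
    rw [Subsingleton.elim a 0, map_zero, norm_zero, norm_zero]
  refine le_antisymm (hm a) ?_
  -- find x₀ attaining the norm
  obtain ⟨x₀, -, hx₀⟩ := isCompact_univ.exists_isMaxOn univ_nonempty
    ((map_continuous a).norm.continuousOn)
  have hnorm : ‖a‖ = ‖a x₀‖ := by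
    refine le_antisymm ?_ (a.norm_coe_le_norm x₀)
    exact (ContinuousMap.norm_le a (norm_nonneg _)).mpr fun x => hx₀ (mem_univ x)
  set lam : ℝ := a x₀ with hlam
  -- claim : lam ∈ spectrum ℝ (m a)
  have hmem : lam ∈ spectrum ℝ (m a) := by
    rw [spectrum.mem_iff]
    intro hunit
    set b : C(K, ℝ) := algebraMap ℝ C(K, ℝ) lam - a with hb
    have hmb : m b = algebraMap ℝ (X →L[ℝ] X) lam - m a := by
      rw [hb, map_sub, AlgHom.commutes]
    rw [← hmb] at hunit
    set u : X →L[ℝ] X := ↑hunit.unit⁻¹ with hu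
    have hub : u * m b = 1 := hunit.unit.inv_mul
    have hbx₀ : b x₀ = 0 := by simp [hb, hlam]
    set ε : ℝ := 1 / (2 * (‖u‖ + 1)) with hε
    have hεpos : 0 < ε := by positivity
    set V : Set K := {x | |b x| < ε} with hV
    have hVopen : IsOpen V := isOpen_lt (map_continuous b).abs continuous_const
    have hx₀V : x₀ ∈ V := by simp [hV, hbx₀, hεpos]
    obtain ⟨s, hs_nhds, hs_closed, hsV⟩ :=
      exists_mem_nhds_isClosed_subset (hVopen.mem_nhds hx₀V)
    set W : Set K := interior s with hW
    have hx₀W : x₀ ∈ W := mem_interior_iff_mem_nhds.mpr hs_nhds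
    have hclW : closure W ⊆ V := (closure_minimal interior_subset hs_closed).trans hsV
    -- Urysohn f : 1 on closure W, 0 off V
    obtain ⟨f, hf0, hf1, hf01⟩ := exists_continuous_zero_one_of_isClosed
      hVopen.isClosed_compl isClosed_closure
      (disjoint_compl_left_iff_subset.mpr hclW)
    -- Urysohn g : 0 off W, 1 at x₀
    obtain ⟨g, hg0, hg1, hg01⟩ := exists_continuous_zero_one_of_isClosed
      isOpen_interior.isClosed_compl isClosed_singleton
      (disjoint_compl_left_iff_subset.mpr (singleton_subset_iff.mpr hx₀W))
    have hbf : ‖b * f‖ ≤ ε := by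
      refine (ContinuousMap.norm_le _ hεpos.le).mpr fun x => ?_
      by_cases hx : x ∈ V
      · calc ‖(b * f) x‖ = |b x| * |f x| := abs_mul _ _
          _ ≤ ε * 1 := by
              apply mul_le_mul (le_of_lt hx) (abs_le.mpr ⟨by linarith [(hf01 x).1],
                (hf01 x).2⟩) (abs_nonneg _) hεpos.le
          _ = ε := mul_one ε
      · have : f x = 0 := hf0 hx
        simp [this, hεpos.le]
    have hmf : ‖m f‖ ≤ 1 / 2 := by
      have : m f = u * m (b * f) := by
        rw [map_mul, ← mul_assoc, hub, one_mul]
      calc ‖m f‖ = ‖u * m (b * f)‖ := by rw [this]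
        _ ≤ ‖u‖ * ‖m (b * f)‖ := norm_mul_le _ _
        _ ≤ ‖u‖ * ε := by
            exact mul_le_mul_of_nonneg_left ((hm _).trans hbf) (norm_nonneg u)
        _ ≤ (‖u‖ + 1) * ε := by nlinarith [norm_nonneg u, hεpos]
        _ = 1 / 2 := by
            have hu1 : ‖u‖ + 1 ≠ 0 := by positivity
            rw [hε]; field_simp
    have hgf : g * f = g := by
      ext x
      by_cases hx : x ∈ W
      · have : f x = 1 := hf1 (subset_closure hx)
        simp [this]
      · have : g x = 0 := hg0 hx
        simp [this]
    have hmg : m g = 0 := by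
      have h1 : ‖m g‖ ≤ ‖m g‖ * (1 / 2) := by
        calc ‖m g‖ = ‖m (g * f)‖ := by rw [hgf]
          _ = ‖m g * m f‖ := by rw [map_mul]
          _ ≤ ‖m g‖ * ‖m f‖ := norm_mul_le _ _
          _ ≤ ‖m g‖ * (1 / 2) := mul_le_mul_of_nonneg_left hmf (norm_nonneg _)
      have : ‖m g‖ = 0 := by nlinarith [norm_nonneg (m g)]
      exact norm_eq_zero.mp this
    have : g = 0 := hinj (by rw [hmg, map_zero])
    have := hg1 (mem_singleton x₀)
    rw [this] at *
    simp_all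
  calc ‖a‖ = ‖lam‖ := hnorm
    _ ≤ ‖m a‖ := spectrum.norm_le_norm_of_mem hmem
end

section
/- Let K be a totally disconnected compact Hausdorff space, X a Banach C(K)-module via an isometric unital algebra homomorphism m : C(K) → L(X), and let x ∈ X have a carrier projection e_x (an idempotent in C(K) with m(e_x)x = x that is minimal among idempotents e with m(e)x = x). Then for every a ∈ C(K), m(a)x = 0 if and only if a·e_x = 0 in C(K). -/
open Filter Topology

/-- `e` is the carrier projection of `x`: an idempotent in `C(K)` with `m e x = x`,
minimal among all idempotents `f` with `m f x = x`. -/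
def IsCarrier {K X : Type*} [TopologicalSpace K] [CompactSpace K] [T2Space K]
    [NormedAddCommGroup X] [NormedSpace ℝ X] [CompleteSpace X]
    (m : C(K, ℝ) →ₐ[ℝ] (X →L[ℝ] X)) (x : X) (e : C(K, ℝ)) : Prop :=
  e * e = e ∧ m e x = x ∧ ∀ f : C(K, ℝ), f * f = f → m f x = x → e ≤ f

theorem stmt3 {K X : Type*} [TopologicalSpace K] [CompactSpace K] [T2Space K]
    [TotallyDisconnectedSpace K]
    [NormedAddCommGroup X] [NormedSpace ℝ X] [CompleteSpace X]
    (m : C(K, ℝ) →ₐ[ℝ] (X →L[ℝ] X))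
    (hm : ∀ a : C(K, ℝ), ‖m a‖ = ‖a‖)
    (x : X) (e : C(K, ℝ)) (he : IsCarrier m x e) :
    ∀ a : C(K, ℝ), m a x = 0 ↔ a * e = 0 := by
  obtain ⟨hee, hex, hmin⟩ := he
  intro a
  constructor
  · -- forward direction
    intro hax
    ext k
    simp only [ContinuousMap.mul_apply, ContinuousMap.zero_apply]
    by_contra hk
    have hak : a k ≠ 0 := fun h => hk (by rw [h, zero_mul])
    have hek1 : e k = 1 := by
      have h1 : e k * e k = e k := by
        have := DFunLike.congr_fun hee k
        simpa using this
      have h0 : e k ≠ 0 := fun h => hk (by rw [h, mul_zero])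
      exact mul_left_cancel₀ h0 (by rw [h1, mul_one])
    -- open set around k where e > 1/2 and |a| > |a k|/2
    set W : Set K := {k' | (1:ℝ)/2 < e k'} ∩ {k' | |a k| / 2 < |a k'|} with hW
    have hWopen : IsOpen W := by
      apply IsOpen.inter
      · exact isOpen_lt continuous_const (map_continuous e)
      · exact isOpen_lt continuous_const (continuous_abs.comp (map_continuous a))
    have hkW : k ∈ W := by
      constructor
      · simp only [Set.mem_setOf_eq, hek1]; norm_num
      · simp only [Set.mem_setOf_eq]
        have : 0 < |a k| := abs_pos.mpr hak
        linarith
    obtain ⟨V, hVclopen, hkV, hVW⟩ := compact_exists_isClopen_in_isOpen hWopen hkW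
    classical
    have hfr : frontier V = ∅ := hVclopen.frontier_eq
    -- indicator of V
    have hχcont : Continuous fun k' => if k' ∈ V then (1:ℝ) else 0 := by
      apply Continuous.if
      · intro a' ha'
        rw [show {x | x ∈ V} = V from rfl, hfr] at ha'
        exact absurd ha' (Set.notMem_empty a')
      · exact continuous_const
      · exact continuous_const
    set χ : C(K, ℝ) := ⟨fun k' => if k' ∈ V then (1:ℝ) else 0, hχcont⟩ with hχ
    -- a is nonzero on V
    have haV : ∀ k' ∈ V, a k' ≠ 0 := by
      intro k' hk'
      have := (hVW hk').2
      simp only [Set.mem_setOf_eq] at this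
      have h0 : 0 < |a k| := abs_pos.mpr hak
      have : 0 < |a k'| := by linarith
      exact abs_pos.mp this
    -- the "inverse on V" function
    have hhcont : Continuous fun k' => if k' ∈ V then (a k')⁻¹ else 0 := by
      apply continuous_if
      · intro a' ha'
        rw [show {x | x ∈ V} = V from rfl, hfr] at ha'
        exact absurd ha' (Set.notMem_empty a')
      · rw [show {x | x ∈ V} = V from rfl, hVclopen.1.closure_eq]
        exact ContinuousOn.inv₀ (map_continuous a).continuousOn haV
      · exact continuousOn_const
    set h : C(K, ℝ) := ⟨fun k' => if k' ∈ V then (a k')⁻¹ else 0, hhcont⟩ with hh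
    have hha : h * a = χ := by
      ext k'
      simp only [ContinuousMap.mul_apply, hh, hχ, ContinuousMap.coe_mk]
      by_cases hk' : k' ∈ V
      · simp [hk', inv_mul_cancel₀ (haV k' hk')]
      · simp [hk']
    -- m χ x = 0
    have hmχ : m χ x = 0 := by
      rw [← hha, map_mul]
      simp only [ContinuousLinearMap.mul_apply]
      rw [hax, map_zero]
    -- V ⊆ {e = 1}, so e * χ = χ
    have heχ : e * χ = χ := by
      ext k'
      simp only [ContinuousMap.mul_apply, hχ, ContinuousMap.coe_mk]
      by_cases hk' : k' ∈ V
      · have h1 : (1:ℝ)/2 < e k' := (hVW hk').1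
        have h2 : e k' * e k' = e k' := by
          have := DFunLike.congr_fun hee k'
          simpa using this
        have h0 : e k' ≠ 0 := by intro h; rw [h] at h1; linarith
        have : e k' = 1 := mul_left_cancel₀ h0 (by rw [h2, mul_one])
        simp [hk', this]
      · simp [hk']
    -- f = e - χ is idempotent with m f x = x
    set f : C(K, ℝ) := e - χ with hf
    have hχχ : χ * χ = χ := by
      ext k'
      simp only [ContinuousMap.mul_apply, hχ, ContinuousMap.coe_mk]
      by_cases hk' : k' ∈ V <;> simp [hk']
    have hff : f * f = f := by
      ext k'
      simp only [hf, ContinuousMap.mul_apply, ContinuousMap.sub_apply, hχ,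
        ContinuousMap.coe_mk]
      have h2 : e k' * e k' = e k' := by
        have := DFunLike.congr_fun hee k'
        simpa using this
      by_cases hk' : k' ∈ V
      · have h1 : (1:ℝ)/2 < e k' := (hVW hk').1
        have h0 : e k' ≠ 0 := by intro h; rw [h] at h1; linarith
        have he1 : e k' = 1 := mul_left_cancel₀ h0 (by rw [h2, mul_one])
        simp [hk', he1]
      · simp [hk', h2]
    have hmf : m f x = x := by
      rw [hf, map_sub]
      simp only [ContinuousLinearMap.sub_apply]
      rw [hex, hmχ, sub_zero]
    have hle := hmin f hff hmf
    have := hle k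
    simp only [ContinuousMap.toFun_eq_coe, hf, ContinuousMap.sub_apply, hχ,
      ContinuousMap.coe_mk, hek1, if_pos hkV] at this
    linarith
  · intro hae
    have : m a x = m (a * e) x := by
      rw [map_mul]
      simp only [ContinuousLinearMap.mul_apply]
      rw [hex]
    rw [this, hae, map_zero]
    rfl
end

section
/- Let K be a totally disconnected compact Hausdorff space, X an isometric Banach C(K)-module, x ∈ X with carrier projection e_x, and let a be a nonnegative function in C(K) with m(a)x = 0. Then a vanishes on the support of e_x, i.e. a·e_x = 0. -/
open Filter Topology

theorem stmt4 {K X : Type*} [TopologicalSpace K] [CompactSpace K] [T2Space K]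
    [TotallyDisconnectedSpace K]
    [NormedAddCommGroup X] [NormedSpace ℝ X] [CompleteSpace X]
    (m : C(K, ℝ) →ₐ[ℝ] (X →L[ℝ] X))
    (hm : ∀ a : C(K, ℝ), ‖m a‖ = ‖a‖)
    (x : X) (e : C(K, ℝ)) (he : IsCarrier m x e)
    (a : C(K, ℝ)) (ha : 0 ≤ a) (hax : m a x = 0) :
    a * e = 0 := by
  classical
  obtain ⟨hee, hex, hmin⟩ := he
  have key : ∀ ε : ℝ, 0 < ε → ∀ k : K, ε ≤ a k → e k = 0 := by
    intro ε hε k hk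
    set C : Set K := {k | ε ≤ a k} with hC
    set U : Set K := {k | ε / 2 < a k} with hU
    have hCcl : IsClosed C := isClosed_le continuous_const a.continuous
    have hCcompact : IsCompact C := hCcl.isCompact
    have hUopen : IsOpen U := isOpen_lt continuous_const a.continuous
    have hCU : C ⊆ U := by
      intro y hy
      have hy' : ε ≤ a y := hy
      show ε / 2 < a y
      linarith
    have hch : ∀ y ∈ C, ∃ V : Set K, IsClopen V ∧ y ∈ V ∧ V ⊆ U := fun y hy =>
      compact_exists_isClopen_in_isOpen hUopen (hCU hy)
    choose W hW hyW hWU using hch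
    obtain ⟨t, ht⟩ := hCcompact.elim_nhds_subcover' (fun y hy => W y hy)
      (fun y hy => (hW y hy).2.mem_nhds (hyW y hy))
    set V : Set K := ⋃ y ∈ t, W y y.2 with hVdef
    have hVclopen : IsClopen V := isClopen_biUnion_finset fun y _ => hW y y.2
    have hCV : C ⊆ V := ht
    have hVU : V ⊆ U := Set.iUnion₂_subset fun y _ => hWU y y.2
    have haV : ∀ y ∈ V, a y ≠ 0 := fun y hy => ne_of_gt (lt_trans (by linarith) (hVU hy))
    -- the inverse-on-V function
    have hbcont : Continuous (V.piecewise (fun y => (a y)⁻¹) 0) := by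
      apply continuous_piecewise
      · intro y hy
        rw [hVclopen.frontier_eq] at hy
        exact absurd hy (Set.notMem_empty y)
      · rw [hVclopen.isClosed.closure_eq]
        exact ContinuousOn.inv₀ a.continuous.continuousOn haV
      · exact continuousOn_const
    set b : C(K, ℝ) := ⟨V.piecewise (fun y => (a y)⁻¹) 0, hbcont⟩ with hbdef
    set f : C(K, ℝ) := a * b with hfdef
    have hfval : ∀ y : K, f y = if y ∈ V then 1 else 0 := by
      intro y
      by_cases hy : y ∈ V
      · simp only [hfdef, ContinuousMap.mul_apply, hbdef, ContinuousMap.coe_mk,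
          Set.piecewise_eq_of_mem _ _ _ hy, hy, if_true]
        exact mul_inv_cancel₀ (haV y hy)
      · simp [hfdef, hbdef, Set.piecewise_eq_of_notMem _ _ _ hy, hy]
    have hff : f * f = f := by
      ext y
      simp only [ContinuousMap.mul_apply, hfval y]
      by_cases hy : y ∈ V <;> simp [hy]
    have hmfx : m f x = 0 := by
      have : f = b * a := by rw [hfdef, mul_comm]
      rw [this, map_mul]
      show (m b) ((m a) x) = 0
      rw [hax, map_zero]
    set g : C(K, ℝ) := 1 - f with hgdef
    have hgg : g * g = g := by
      have h1 : (1 - f) * (1 - f) = 1 - 2 * f + f * f := by ring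
      rw [hgdef, h1, hff]; ring
    have hgx : m g x = x := by
      rw [hgdef, map_sub, map_one]
      show x - m f x = x
      rw [hmfx, sub_zero]
    have hle : e ≤ g := hmin g hgg hgx
    have hkV : k ∈ V := hCV hk
    have hgk : g k = 0 := by
      simp [hgdef, hfval k, hkV]
    have h1 : e k ≤ 0 := by
      have h' : e k ≤ g k := hle k
      rwa [hgk] at h'
    have h2 : 0 ≤ e k := by
      have := ContinuousMap.congr_fun hee k
      rw [ContinuousMap.mul_apply] at this
      nlinarith [sq_nonneg (e k)]
    linarith
  ext k
  simp only [ContinuousMap.mul_apply, ContinuousMap.zero_apply]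
  have hk0 : (0:ℝ) ≤ a k := by simpa using ha k
  rcases eq_or_lt_of_le hk0 with h | h
  · rw [← h, zero_mul]
  · rw [key (a k) h k le_rfl, mul_zero]
end

section
/- Let X be a Veksler module over C(K) (K totally disconnected compact Hausdorff), i.e. every nonzero x ∈ X has a carrier projection e_x. Then for every nonzero x ∈ X, the compact space K_x (the clopen support of e_x) is quasi-Stonian (basically disconnected): the closure of every open F_σ (equivalently, cozero) set in K_x is open. -/
open Filter Topology Classical

noncomputable def chi {K : Type*} [TopologicalSpace K] (V : Set K) (hV : IsClopen V) :
    C(K, ℝ) :=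
  ⟨fun k => if k ∈ V then 1 else 0, by
    apply continuous_if ?_ continuousOn_const continuousOn_const
    intro a ha
    rw [show {x | x ∈ V} = V from rfl, hV.frontier_eq] at ha
    exact absurd ha (Set.notMem_empty a)⟩

lemma chi_apply {K : Type*} [TopologicalSpace K] (V : Set K) (hV : IsClopen V) (k : K) :
    chi V hV k = if k ∈ V then 1 else 0 := rfl

lemma chi_idem {K : Type*} [TopologicalSpace K] (V : Set K) (hV : IsClopen V) :
    chi V hV * chi V hV = chi V hV := by
  ext k
  by_cases h : k ∈ V <;> simp [chi_apply, h]

/-- If `m w x = 0` and `w ≥ c > 0` on a clopen set `V`, then the carrier `e` of `x`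
vanishes on `V`. -/
lemma killV {K X : Type*} [TopologicalSpace K] [CompactSpace K] [T2Space K]
    [NormedAddCommGroup X] [NormedSpace ℝ X] [CompleteSpace X]
    (m : C(K, ℝ) →ₐ[ℝ] (X →L[ℝ] X)) (x : X) (e : C(K, ℝ)) (he : IsCarrier m x e)
    (w : C(K, ℝ)) (hw : m w x = 0) (V : Set K) (hV : IsClopen V)
    (c : ℝ) (hc : 0 < c) (hcw : ∀ k ∈ V, c ≤ w k) :
    ∀ k ∈ V, e k ≤ 0 := by
  have hinv : Continuous fun k => (max (w k) c)⁻¹ := by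
    apply (w.continuous.max continuous_const).inv₀
    intro k
    exact ne_of_gt (lt_of_lt_of_le hc (le_max_right _ _))
  set v : C(K, ℝ) := chi V hV * ⟨fun k => (max (w k) c)⁻¹, hinv⟩ with hv
  have hvw : v * w = chi V hV := by
    ext k
    by_cases h : k ∈ V
    · have h1 : max (w k) c = w k := max_eq_left (hcw k h)
      have h2 : w k ≠ 0 := ne_of_gt (lt_of_lt_of_le hc (hcw k h))
      simp [hv, chi_apply, h, ContinuousMap.mul_apply, h1, inv_mul_cancel₀ h2]
    · simp [hv, chi_apply, h, ContinuousMap.mul_apply]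
  have hchi0 : m (chi V hV) x = 0 := by
    rw [← hvw, map_mul, ContinuousLinearMap.mul_apply, hw, map_zero]
  have hfid : (1 - chi V hV) * (1 - chi V hV) = 1 - chi V hV := by
    ext k
    by_cases h : k ∈ V <;>
      simp [ContinuousMap.sub_apply, ContinuousMap.mul_apply, chi_apply, h]
  have hfx : m (1 - chi V hV) x = x := by
    rw [map_sub, map_one, ContinuousLinearMap.sub_apply, ContinuousLinearMap.one_apply,
      hchi0, sub_zero]
  have hle := he.2.2 _ hfid hfx
  intro k hk
  have := ContinuousMap.le_def.mp hle k
  simpa [ContinuousMap.sub_apply, ContinuousMap.one_apply, chi_apply, hk] using this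

/-- An open Fσ subset of a compact Hausdorff space is a cozero set. -/
lemma exists_cozero {K : Type*} [TopologicalSpace K] [CompactSpace K] [T2Space K]
    (U : Set K) (hU : IsOpen U) (F : ℕ → Set K) (hF : ∀ n, IsClosed (F n))
    (hUF : U = ⋃ n, F n) :
    ∃ u : C(K, ℝ), (∀ k, 0 ≤ u k) ∧ ∀ k, k ∈ U ↔ 0 < u k := by
  have hsub : ∀ n, Disjoint Uᶜ (F n) := fun n =>
    Set.disjoint_left.mpr fun k hk hkF => hk (hUF ▸ Set.mem_iUnion.mpr ⟨n, hkF⟩)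
  choose un h0 h1 hicc using fun n =>
    exists_continuous_zero_one_of_isClosed hU.isClosed_compl (hF n) (hsub n)
  set g : ℕ → C(K, ℝ) := fun n => (2⁻¹ : ℝ) ^ n • un n with hg
  have hgeo : Summable fun n : ℕ => (2⁻¹ : ℝ) ^ n :=
    summable_geometric_of_lt_one (by norm_num) (by norm_num)
  have hnorm : ∀ n, ‖g n‖ ≤ (2⁻¹ : ℝ) ^ n := by
    intro n
    show ‖(2⁻¹:ℝ)^n • un n‖ ≤ _
    rw [norm_smul ((2:ℝ)⁻¹^n) (un n)]
    have h1 : ‖un n‖ ≤ 1 := by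
      apply (ContinuousMap.norm_le _ (by norm_num)).mpr
      intro k
      rw [Real.norm_eq_abs, abs_le]
      exact ⟨by linarith [(hicc n k).1], (hicc n k).2⟩
    calc ‖(2⁻¹:ℝ)^n‖ * ‖un n‖ ≤ ‖(2⁻¹:ℝ)^n‖ * 1 :=
          mul_le_mul_of_nonneg_left h1 (norm_nonneg _)
      _ = (2⁻¹:ℝ)^n := by
          rw [mul_one, Real.norm_eq_abs, abs_of_nonneg (by positivity)]
  have hsum : Summable g := Summable.of_norm_bounded hgeo hnorm
  refine ⟨∑' n, g n, ?_, ?_⟩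
  all_goals
    have heval : ∀ k : K, (∑' n, g n) k = ∑' n, (2⁻¹:ℝ)^n * un n k := by
      intro k
      have := (ContinuousMap.evalCLM ℝ k).map_tsum hsum
      simpa [ContinuousMap.evalCLM, hg, smul_eq_mul] using this
    have hknn : ∀ (k : K) (n : ℕ), 0 ≤ (2⁻¹:ℝ)^n * un n k := fun k n =>
      mul_nonneg (by positivity) (hicc n k).1
    have hksum : ∀ k : K, Summable fun n => (2⁻¹:ℝ)^n * un n k := by
      intro k
      apply Summable.of_nonneg_of_le (hknn k) _ hgeo
      intro n
      calc (2⁻¹:ℝ)^n * un n k ≤ (2⁻¹:ℝ)^n * 1 :=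
            mul_le_mul_of_nonneg_left (hicc n k).2 (by positivity)
        _ = (2⁻¹:ℝ)^n := mul_one _
  · intro k
    rw [heval k]
    exact tsum_nonneg (hknn k)
  · intro k
    constructor
    · intro hk
      obtain ⟨n, hn⟩ := Set.mem_iUnion.mp (hUF ▸ hk)
      rw [heval k]
      apply Summable.tsum_pos (hksum k) (hknn k) n
      have : un n k = 1 := h1 n hn
      rw [this, mul_one]
      positivity
    · intro hk
      by_contra hkU
      rw [heval k] at hk
      have : ∀ n, (2⁻¹:ℝ)^n * un n k = 0 := by
        intro n
        have : un n k = 0 := h0 n hkU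
        rw [this, mul_zero]
      rw [tsum_congr this, tsum_zero] at hk
      exact lt_irrefl _ hk

theorem stmt5 {K X : Type*} [TopologicalSpace K] [CompactSpace K] [T2Space K]
    [TotallyDisconnectedSpace K]
    [NormedAddCommGroup X] [NormedSpace ℝ X] [CompleteSpace X]
    (m : C(K, ℝ) →ₐ[ℝ] (X →L[ℝ] X))
    (hm : ∀ a : C(K, ℝ), ‖m a‖ = ‖a‖)
    (hVeksler : ∀ z : X, z ≠ 0 → ∃ e : C(K, ℝ), IsCarrier m z e)
    (x : X) (hx : x ≠ 0) (e : C(K, ℝ)) (he : IsCarrier m x e) :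
    ∀ U : Set {k : K // e k = 1}, IsOpen U →
      (∃ F : ℕ → Set {k : K // e k = 1}, (∀ n, IsClosed (F n)) ∧ U = ⋃ n, F n) →
      IsOpen (closure U) := by
  rintro U hUopen ⟨F, hFclosed, hUF⟩
  classical
  -- dichotomy for values of an idempotent continuous map
  have idem_dich : ∀ (g : C(K, ℝ)), g * g = g → ∀ k, g k = 0 ∨ g k = 1 := by
    intro g hg k
    have h : g k * g k = g k := ContinuousMap.congr_fun hg k
    have h2 : g k * (g k - 1) = 0 := by rw [mul_sub, mul_one, h, sub_self]
    rcases mul_eq_zero.mp h2 with h0 | h1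
    · exact Or.inl h0
    · exact Or.inr (by linarith [sub_eq_zero.mp h1])
  have eIdem := idem_dich e he.1
  -- the support {k | e k = 1} is clopen
  have hKxOpen : IsOpen {k : K | e k = 1} := by
    have hset : {k : K | e k = 1} = e ⁻¹' Set.Ioi (2⁻¹ : ℝ) := by
      ext k
      simp only [Set.mem_setOf_eq, Set.mem_preimage, Set.mem_Ioi]
      constructor
      · intro h; rw [h]; norm_num
      · intro h
        rcases eIdem k with h0 | h1
        · rw [h0] at h; norm_num at h
        · exact h1
    rw [hset]
    exact isOpen_Ioi.preimage e.continuous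
  have hKxClosed : IsClosed {k : K | e k = 1} :=
    (isClosed_singleton (x := (1:ℝ))).preimage e.continuous
  have hcs : CompactSpace {k : K // e k = 1} :=
    isCompact_iff_compactSpace.mp hKxClosed.isCompact
  -- push everything forward to K
  set U' : Set K := Subtype.val '' U with hU'
  have hU'open : IsOpen U' := hKxOpen.isOpenMap_subtype_val U hUopen
  have hU'sub : U' ⊆ {k : K | e k = 1} := by
    rintro _ ⟨k, _, rfl⟩
    exact k.2
  have hF'closed : ∀ n, IsClosed (Subtype.val '' F n) := fun n =>
    (((hFclosed n).isCompact).image continuous_subtype_val).isClosed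
  have hU'F : U' = ⋃ n, Subtype.val '' F n := by rw [hU', hUF, Set.image_iUnion]
  obtain ⟨u, hu0, huU⟩ := exists_cozero U' hU'open _ hF'closed hU'F
  -- key step from the carrier property of x
  have key : ∀ k₀ ∈ U', ∀ (w : C(K, ℝ)) (O : Set K), IsOpen O → k₀ ∈ O → m w x = 0 →
      (∀ k ∈ O, u k₀ / 2 < u k → u k₀ / 2 ≤ w k) → False := by
    intro k₀ hk₀ w O hOopen hk₀O hw hwu
    have hpos : 0 < u k₀ := (huU k₀).mp hk₀
    set c := u k₀ / 2 with hc
    have hcpos : 0 < c := half_pos hpos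
    have hO2 : IsOpen (O ∩ {k | c < u k}) :=
      hOopen.inter (isOpen_lt continuous_const u.continuous)
    have hk₀O2 : k₀ ∈ O ∩ {k | c < u k} := ⟨hk₀O, half_lt_self hpos⟩
    obtain ⟨V, hV, hk₀V, hVO⟩ := compact_exists_isClopen_in_isOpen hO2 hk₀O2
    have hkill := killV m x e he w hw V hV c hcpos
      (fun k hk => hwu k (hVO hk).1 (hVO hk).2)
    have he1 : e k₀ = 1 := hU'sub hk₀
    have := hkill k₀ hk₀V
    rw [he1] at this
    linarith
  by_cases hy : m u x = 0
  · -- then U is empty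
    have hUempty : U = ∅ := by
      rw [Set.eq_empty_iff_forall_notMem]
      intro k hk
      exact key k.val ⟨k, hk, rfl⟩ u Set.univ isOpen_univ trivial hy
        (fun k _ h => le_of_lt h)
    rw [hUempty, closure_empty]
    exact isOpen_empty
  · obtain ⟨f, hf⟩ := hVeksler _ hy
    have fIdem := idem_dich f hf.1
    have hCclosed : IsClosed {k : K | f k = 1} :=
      (isClosed_singleton (x := (1:ℝ))).preimage f.continuous
    have hCopen : IsOpen {k : K | f k = 1} := by
      have hset : {k : K | f k = 1} = f ⁻¹' Set.Ioi (2⁻¹ : ℝ) := by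
        ext k
        simp only [Set.mem_setOf_eq, Set.mem_preimage, Set.mem_Ioi]
        constructor
        · intro h; rw [h]; norm_num
        · intro h
          rcases fIdem k with h0 | h1
          · rw [h0] at h; norm_num at h
          · exact h1
      rw [hset]
      exact isOpen_Ioi.preimage f.continuous
    -- U' ⊆ {f = 1}
    have hUC : U' ⊆ {k : K | f k = 1} := by
      intro k₀ hk₀
      rcases fIdem k₀ with h0 | h1
      · exfalso
        have hw0 : m ((1 - f) * u) x = 0 := by
          rw [map_mul, ContinuousLinearMap.mul_apply, map_sub, map_one,
            ContinuousLinearMap.sub_apply, ContinuousLinearMap.one_apply, hf.2.1, sub_self]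
        apply key k₀ hk₀ ((1 - f) * u) {k | f k < 2⁻¹}
          (isOpen_lt f.continuous continuous_const) (by norm_num [Set.mem_setOf_eq, h0]) hw0
        intro k hk hku
        have hfk : f k = 0 := by
          rcases fIdem k with h' | h'
          · exact h'
          · exfalso
            have hk' : f k < 2⁻¹ := hk
            rw [h'] at hk'
            norm_num at hk'
        have : ((1 - f) * u) k = u k := by
          simp [ContinuousMap.mul_apply, ContinuousMap.sub_apply, hfk]
        rw [this]
        exact le_of_lt hku
      · exact h1
    -- {f = 1} ⊆ closure U'
    have hCU : {k : K | f k = 1} ⊆ closure U' := by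
      intro k₀ hk₀
      by_contra hk
      obtain ⟨W, hW, hk₀W, hWsub⟩ := compact_exists_isClopen_in_isOpen
        (isOpen_compl_iff.mpr isClosed_closure) hk
      have hgu : (1 - chi W hW) * u = u := by
        ext k
        by_cases h : k ∈ W
        · have hkU : k ∉ U' := fun hkU => (hWsub h) (subset_closure hkU)
          have hu0' : u k = 0 := by
            have hnp : ¬ 0 < u k := fun hp => hkU ((huU k).mpr hp)
            linarith [hu0 k]
          simp [ContinuousMap.mul_apply, ContinuousMap.sub_apply, chi_apply, h, hu0']
        · simp [ContinuousMap.mul_apply, ContinuousMap.sub_apply, chi_apply, h]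
      have hgy : m (1 - chi W hW) (m u x) = m u x := by
        rw [← ContinuousLinearMap.mul_apply, ← map_mul, hgu]
      have hgid : (1 - chi W hW) * (1 - chi W hW) = 1 - chi W hW := by
        ext k
        by_cases h : k ∈ W <;>
          simp [ContinuousMap.sub_apply, ContinuousMap.mul_apply, chi_apply, h]
      have h1 := ContinuousMap.le_def.mp (hf.2.2 _ hgid hgy) k₀
      have hf1 : f k₀ = 1 := hk₀
      rw [hf1] at h1
      simp [ContinuousMap.sub_apply, chi_apply, hk₀W] at h1
      linarith
    have hclos : closure U' = {k : K | f k = 1} :=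
      Set.Subset.antisymm (closure_minimal hUC hCclosed) hCU
    have hemb := Topology.IsEmbedding.subtypeVal.closure_eq_preimage_closure_image U
    rw [hemb, ← hU', hclos]
    exact hCopen.preimage continuous_subtype_val
end

section
/- Let X be a Veksler module over C(K), x ∈ X nonzero with carrier projection e_x, and a ∈ C(K) supported in the clopen set K_x. Then the carrier projection (in e_x·C(K)) of the function a equals the carrier projection e_{m(a)x} of the element m(a)x; equivalently, for all b ∈ C(K_x): b·a = 0 if and only if b·e_{m(a)x} = 0. -/
open Filter Topology

/-- Auxiliary: if `e` is a carrier of `x` and `c` is supported on `e` with `m c x = 0`,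
then `c = 0`. -/
lemma carrier_faithful {K X : Type*} [TopologicalSpace K] [CompactSpace K] [T2Space K]
    [TotallyDisconnectedSpace K]
    [NormedAddCommGroup X] [NormedSpace ℝ X] [CompleteSpace X]
    (m : C(K, ℝ) →ₐ[ℝ] (X →L[ℝ] X)) (x : X) (e : C(K, ℝ)) (he : IsCarrier m x e)
    (c : C(K, ℝ)) (hce : c * e = c) (hcx : m c x = 0) : c = 0 := by
  classical
  by_contra hc
  -- pick a point where c is nonzero
  obtain ⟨t, ht⟩ : ∃ t, c t ≠ 0 := by
    by_contra h
    push_neg at h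
    exact hc (ContinuousMap.ext fun t => h t)
  -- clopen set U ∋ t inside {c ≠ 0}
  obtain ⟨U, hU, htU, hUsub⟩ :=
    compact_exists_isClopen_in_isOpen (U := {s | c s ≠ 0})
      (isOpen_ne.preimage c.continuous) ht
  have hfront : frontier U = ∅ := hU.frontier_eq
  -- characteristic function of U
  have contχ : Continuous fun s => if s ∈ U then (1 : ℝ) else 0 := by
    apply continuous_if _ continuous_const.continuousOn continuous_const.continuousOn
    intro s hs; rw [Set.setOf_mem_eq, hfront] at hs; exact absurd hs (Set.notMem_empty s)
  set χ : C(K, ℝ) := ⟨fun s => if s ∈ U then (1 : ℝ) else 0, contχ⟩ with hχdef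
  -- the "inverse" of c on U
  have contd : Continuous fun s => if s ∈ U then (c s)⁻¹ else 0 := by
    apply continuous_if _ _ continuous_const.continuousOn
    · intro s hs; rw [Set.setOf_mem_eq, hfront] at hs; exact absurd hs (Set.notMem_empty s)
    · have hcl : closure {x | x ∈ U} = U := by rw [Set.setOf_mem_eq]; exact hU.isClosed.closure_eq
      rw [hcl]
      exact c.continuous.continuousOn.inv₀ fun s hs => hUsub hs
  set d : C(K, ℝ) := ⟨fun s => if s ∈ U then (c s)⁻¹ else 0, contd⟩ with hddef
  have hdc : d * c = χ := by
    ext s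
    simp only [ContinuousMap.mul_apply, hddef, hχdef, ContinuousMap.coe_mk]
    by_cases hs : s ∈ U
    · simp [hs, inv_mul_cancel₀ (hUsub hs)]
    · simp [hs]
  have hχ2 : χ * χ = χ := by
    ext s
    simp only [ContinuousMap.mul_apply, hχdef, ContinuousMap.coe_mk]
    by_cases hs : s ∈ U <;> simp [hs]
  -- m χ x = 0
  have hχx : m χ x = 0 := by
    rw [← hdc, map_mul, ContinuousLinearMap.mul_apply, hcx, map_zero]
  -- f := e - e*χ is an idempotent fixing x
  set f : C(K, ℝ) := e - e * χ with hfdef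
  have hf2 : f * f = f := by
    rw [hfdef]; linear_combination (1 - 2*χ + χ*χ) * he.1 + e * hχ2
  have hfx : m f x = x := by
    rw [hfdef, map_sub, map_mul, ContinuousLinearMap.sub_apply,
      ContinuousLinearMap.mul_apply, hχx, map_zero, sub_zero, he.2.1]
  have hle := he.2.2 f hf2 hfx
  -- contradiction at the point t
  have het : e t = 1 := by
    have hct : c t * e t = c t := by
      have := congrArg (fun g : C(K, ℝ) => g t) hce
      simpa using this
    have : c t * e t = c t * 1 := by rw [hct, mul_one]
    exact mul_left_cancel₀ ht this
  have hχt : χ t = 1 := by simp [hχdef, htU]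
  have h1 : e t ≤ f t := hle t
  rw [hfdef] at h1
  simp only [ContinuousMap.sub_apply, ContinuousMap.mul_apply, hχt, het, mul_one] at h1
  norm_num at h1

theorem stmt6 {K X : Type*} [TopologicalSpace K] [CompactSpace K] [T2Space K]
    [TotallyDisconnectedSpace K]
    [NormedAddCommGroup X] [NormedSpace ℝ X] [CompleteSpace X]
    (m : C(K, ℝ) →ₐ[ℝ] (X →L[ℝ] X))
    (hm : ∀ a : C(K, ℝ), ‖m a‖ = ‖a‖)
    (hVeksler : ∀ z : X, z ≠ 0 → ∃ e : C(K, ℝ), IsCarrier m z e)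
    (x : X) (hx : x ≠ 0) (e : C(K, ℝ)) (he : IsCarrier m x e)
    (a : C(K, ℝ)) (ha : a * e = a)
    (e' : C(K, ℝ)) (he' : IsCarrier m (m a x) e')
    : ∀ b : C(K, ℝ), b * e = b → (b * a = 0 ↔ b * e' = 0) := by
  intro b hb
  set y := m a x with hy
  by_cases hy0 : y = 0
  · -- then a = 0 and e' = 0
    have ha0 : a = 0 := carrier_faithful m x e he a ha hy0
    have he'0 : e' = 0 := by
      have hle : e' ≤ 0 := he'.2.2 0 (by ring) (by rw [hy0]; simp)
      ext s
      have h1 : e' s ≤ (0 : C(K, ℝ)) s := hle s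
      have h2 := congrArg (fun g : C(K, ℝ) => g s) he'.1
      simp only [ContinuousMap.mul_apply] at h2
      simp only [ContinuousMap.zero_apply] at h1 ⊢
      nlinarith
    rw [ha0, he'0]
  · constructor
    · intro hba
      have hby : m b y = 0 := by
        rw [hy, ← ContinuousLinearMap.mul_apply, ← map_mul, hba, map_zero]
        rfl
      have : m (b * e') y = 0 := by
        rw [mul_comm, map_mul, ContinuousLinearMap.mul_apply, hby, map_zero]
      exact carrier_faithful m y e' he' (b * e') (by rw [mul_assoc, he'.1]) this
    · intro hbe'
      have hby : m b y = 0 := by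
        conv_lhs => rw [← he'.2.1]
        rw [← ContinuousLinearMap.mul_apply, ← map_mul, hbe', map_zero]
        rfl
      have hmba : m (b * a) x = 0 := by
        rw [map_mul, ContinuousLinearMap.mul_apply]; exact hby
      exact carrier_faithful m x e he (b * a)
        (by rw [mul_assoc, ha]) hmba
end

section
/- Let X be a cyclic Veksler module over C(K) with cyclic vector x₀. If sequences x_n → x and y_n → y in norm in X and the carrier projections satisfy e_{x_n}·e_{y_n} = 0 for each n, then e_x·e_y = 0. -/
open Filter Topology

namespace Stmt7Aux

variable {K X : Type*} [TopologicalSpace K] [CompactSpace K] [T2Space K]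
    [NormedAddCommGroup X] [NormedSpace ℝ X] [CompleteSpace X]

lemma idem_pt {e : C(K, ℝ)} (he : e * e = e) (k : K) : e k = 0 ∨ e k = 1 := by
  have h : e k * e k = e k := by
    have := DFunLike.congr_fun he k
    simpa using this
  rcases mul_eq_zero.mp (show e k * (e k - 1) = 0 by linear_combination h) with h0 | h1
  · exact Or.inl h0
  · exact Or.inr (by linarith [sub_eq_zero.mp h1])

lemma idem_norm_le_one {e : C(K, ℝ)} (he : e * e = e) : ‖e‖ ≤ 1 := by
  rw [ContinuousMap.norm_le _ zero_le_one]
  intro k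
  rcases idem_pt he k with h | h <;> simp [h]

lemma idem_eq_zero_of_le_zero {e : C(K, ℝ)} (he : e * e = e) (h : e ≤ 0) : e = 0 := by
  ext k
  rcases idem_pt he k with h0 | h1
  · simpa using h0
  · exfalso
    have := ContinuousMap.le_def.mp h k
    rw [h1] at this
    simp at this
    linarith

lemma idem_mul_of_le {e f : C(K, ℝ)} (he : e * e = e) (hf : f * f = f) (h : e ≤ f) :
    e * f = e := by
  ext k
  have hk := ContinuousMap.le_def.mp h k
  rcases idem_pt he k with h0 | h1
  · simp [h0]
  · rcases idem_pt hf k with g0 | g1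
    · rw [g0] at hk; rw [h1] at hk; linarith
    · simp [h1, g1]

lemma mul_idem {a b : C(K, ℝ)} (ha : a * a = a) (hb : b * b = b) :
    (a * b) * (a * b) = a * b := by
  linear_combination (b * b) * ha + a * hb

variable (m : C(K, ℝ) →ₐ[ℝ] (X →L[ℝ] X))

lemma m_mul_apply (a b : C(K, ℝ)) (z : X) : m (a * b) z = m a (m b z) := by
  rw [map_mul]; rfl

lemma norm_m_apply_le (hm : ∀ a : C(K, ℝ), ‖m a‖ = ‖a‖) (a : C(K, ℝ)) (z : X) :
    ‖m a z‖ ≤ ‖a‖ * ‖z‖ := by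
  simpa [hm a] using (m a).le_opNorm z

lemma carrier_zero {e : C(K, ℝ)} (h : IsCarrier m 0 e) : e = 0 := by
  refine idem_eq_zero_of_le_zero h.1 ?_
  exact h.2.2 0 (by simp) (by simp)

lemma minj (hm : ∀ a : C(K, ℝ), ‖m a‖ = ‖a‖) (x₀ : X)
    (hcyc : DenseRange fun a : C(K, ℝ) => m a x₀) {a : C(K, ℝ)}
    (h : m a x₀ = 0) : a = 0 := by
  have hz : ∀ b : C(K, ℝ), m a (m b x₀) = 0 := by
    intro b
    rw [← m_mul_apply, mul_comm, m_mul_apply, h, map_zero]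
  have hfun : ⇑(m a) = (fun _ : X => (0 : X)) := by
    refine hcyc.equalizer (m a).continuous continuous_const ?_
    funext b
    exact hz b
  have hma : m a = 0 := ContinuousLinearMap.ext fun z => by
    have := congrFun hfun z; simpa using this
  have : ‖a‖ = 0 := by rw [← hm a, hma, norm_zero]
  exact norm_eq_zero.mp this

/-- From `m r y = 0`, `r` idempotent and carrier of `y`, get `e * r = 0`. -/
lemma kill {y : X} {e r : C(K, ℝ)} (hey : IsCarrier m y e)
    (hr : r * r = r) (hry : m r y = 0) : e * r = 0 := by
  obtain ⟨he, hmey, hmin⟩ := hey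
  have hs : (e - e * r) * (e - e * r) = e - e * r := by
    linear_combination ((1 - r) * (1 - r)) * he + e * hr
  have hms : m (e - e * r) y = y := by
    rw [map_sub, ContinuousLinearMap.sub_apply, m_mul_apply m, hry, map_zero, sub_zero, hmey]
  have hle := hmin _ hs hms
  ext k
  have hk := ContinuousMap.le_def.mp hle k
  have hik : (e * r) * (e * r) = e * r := by
    linear_combination (r * r) * he + e * hr
  rcases idem_pt hik k with h0 | h1
  · simpa using h0
  · exfalso
    have : (e - e * r) k = e k - (e * r) k := by simp
    rw [this, h1] at hk
    linarith

lemma semiexact (hm : ∀ a : C(K, ℝ), ‖m a‖ = ‖a‖)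
    (hV : ∀ z : X, z ≠ 0 → ∃ e : C(K, ℝ), IsCarrier m z e)
    (x y : X) (q : ℕ → C(K, ℝ)) (hq : ∀ n, q n * q n = q n)
    (hqx : Tendsto (fun n => m (q n) x) atTop (𝓝 x))
    (hqy : Tendsto (fun n => m (q n) y) atTop (𝓝 0))
    {ε : ℝ} (hε : 0 < ε) :
    ∃ (z' : X) (r : C(K, ℝ)), ‖z' - x‖ ≤ ε ∧ r * r = r ∧ m r z' = z' ∧ m r y = 0 := by
  -- choose good indices
  have hx' : Tendsto (fun n => ‖m (q n) x - x‖) atTop (𝓝 0) :=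
    tendsto_iff_norm_sub_tendsto_zero.mp hqx
  have hy' : Tendsto (fun n => ‖m (q n) y‖) atTop (𝓝 0) := by
    simpa using hqy.norm
  have H : ∀ j : ℕ, ∃ N : ℕ,
      ‖m (q N) x - x‖ ≤ ε * (1/2) ^ (j + 2) ∧ ‖m (q N) y‖ ≤ (1/2) ^ j := by
    intro j
    have h1 : ∀ᶠ N in atTop, ‖m (q N) x - x‖ < ε * (1/2) ^ (j + 2) :=
      hx'.eventually_lt_const (by positivity)
    have h2 : ∀ᶠ N in atTop, ‖m (q N) y‖ < (1/2 : ℝ) ^ j :=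
      hy'.eventually_lt_const (by positivity)
    obtain ⟨N, hN1, hN2⟩ := (h1.and h2).exists
    exact ⟨N, hN1.le, hN2.le⟩
  choose n hn1 hn2 using H
  -- products
  let t : ℕ → C(K, ℝ) := fun j => Nat.rec (q (n 0)) (fun i ti => ti * q (n (i + 1))) j
  have ht0 : t 0 = q (n 0) := rfl
  have htS : ∀ j, t (j + 1) = t j * q (n (j + 1)) := fun j => rfl
  have htid : ∀ j, t j * t j = t j := by
    intro j
    induction j with
    | zero => exact hq (n 0)
    | succ j ih => rw [htS]; exact mul_idem ih (hq (n (j + 1)))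
  have htmul : ∀ j d : ℕ, t j * t (j + d) = t (j + d) := by
    intro j d
    induction d with
    | zero => exact htid j
    | succ d ih =>
      have : j + (d + 1) = (j + d) + 1 := rfl
      rw [this, htS, ← mul_assoc, ih]
  have htnorm : ∀ j, ‖t j‖ ≤ 1 := fun j => idem_norm_le_one (htid j)
  have hty : ∀ j, ‖m (t j) y‖ ≤ (1/2) ^ j := by
    intro j
    cases j with
    | zero => simpa [ht0] using hn2 0
    | succ j =>
      rw [htS, m_mul_apply]
      calc ‖m (t j) (m (q (n (j + 1))) y)‖ ≤ ‖t j‖ * ‖m (q (n (j + 1))) y‖ :=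
            norm_m_apply_le m hm _ _
        _ ≤ 1 * (1/2) ^ (j + 1) :=
            mul_le_mul (htnorm j) (hn2 (j + 1)) (norm_nonneg _) zero_le_one
        _ = (1/2) ^ (j + 1) := one_mul _
  -- Cauchy sequence
  set w : ℕ → X := fun j => m (t j) x with hw
  have hdist : ∀ j, dist (w j) (w (j + 1)) ≤ (ε * (1/2) ^ 3) * (1/2) ^ j := by
    intro j
    rw [dist_eq_norm]
    have : w j - w (j + 1) = m (t j) (x - m (q (n (j + 1))) x) := by
      rw [map_sub, hw]
      simp only [htS, m_mul_apply]
    rw [this]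
    calc ‖m (t j) (x - m (q (n (j + 1))) x)‖ ≤ ‖t j‖ * ‖x - m (q (n (j + 1))) x‖ :=
          norm_m_apply_le m hm _ _
      _ ≤ 1 * (ε * (1/2) ^ (j + 3)) := by
          refine mul_le_mul (htnorm j) ?_ (norm_nonneg _) zero_le_one
          rw [norm_sub_rev]
          exact hn1 (j + 1)
      _ = (ε * (1/2) ^ 3) * (1/2) ^ j := by ring
  have hcauchy : CauchySeq w :=
    cauchySeq_of_le_geometric (1/2) (ε * (1/2) ^ 3) (by norm_num) hdist
  obtain ⟨z', hz'⟩ := cauchySeq_tendsto_of_complete hcauchy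
  -- distance bound
  have hwb : ∀ j, ‖w j - x‖ ≤ ε / 2 - ε * (1/2) ^ (j + 2) := by
    intro j
    induction j with
    | zero =>
      have h := hn1 0
      have : ‖w 0 - x‖ ≤ ε * (1/2) ^ 2 := by simpa [hw, ht0] using h
      have hp : (1/2 : ℝ) ^ 2 = 1/4 := by norm_num
      have hp2 : (1/2 : ℝ) ^ (0 + 2) = 1/4 := by norm_num
      rw [hp2]; rw [hp] at this; linarith
    | succ j ih =>
      have h1 : ‖w (j + 1) - x‖ ≤ ‖w (j + 1) - w j‖ + ‖w j - x‖ := by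
        have heq : w (j + 1) - x = (w (j + 1) - w j) + (w j - x) := by abel
        rw [heq]
        exact norm_add_le _ _
      have h2 : ‖w (j + 1) - w j‖ ≤ (ε * (1/2) ^ 3) * (1/2) ^ j := by
        rw [norm_sub_rev, ← dist_eq_norm]; exact hdist j
      have hp : (ε * (1/2) ^ 3) * (1/2 : ℝ) ^ j = ε * (1/2) ^ (j + 3) := by ring
      have hp2 : (ε : ℝ) * (1/2) ^ (j + 2) = 2 * (ε * (1/2) ^ (j + 3)) := by ring
      have hp3 : (ε : ℝ) * (1/2) ^ (j + 1 + 2) = ε * (1/2) ^ (j + 3) := by ring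
      rw [hp3]
      rw [hp] at h2
      linarith
  have hz'x : ‖z' - x‖ ≤ ε := by
    have hlim : Tendsto (fun j => ‖w j - x‖) atTop (𝓝 ‖z' - x‖) :=
      (hz'.sub tendsto_const_nhds).norm
    refine le_of_tendsto hlim (Eventually.of_forall fun j => ?_)
    have := hwb j
    have hpos : (0 : ℝ) < ε * (1/2) ^ (j + 2) := by positivity
    linarith
  -- t j fixes z'
  have htz : ∀ j, m (t j) z' = z' := by
    intro j
    have h1 : Tendsto (fun l => m (t j) (w l)) atTop (𝓝 (m (t j) z')) :=
      ((m (t j)).continuous.tendsto z').comp hz'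
    have h2 : Tendsto (fun l => m (t j) (w l)) atTop (𝓝 z') := by
      refine hz'.congr' ?_
      filter_upwards [eventually_ge_atTop j] with l hl
      obtain ⟨d, rfl⟩ := Nat.exists_eq_add_of_le hl
      show w (j + d) = m (t j) (w (j + d))
      rw [hw]
      show m (t (j + d)) x = m (t j) (m (t (j + d)) x)
      rw [← m_mul_apply, htmul]
    exact tendsto_nhds_unique h1 h2
  by_cases hz0 : z' = 0
  · refine ⟨z', 0, hz'x, by simp, ?_, by simp⟩
    rw [hz0]; simp
  · obtain ⟨r, hr⟩ := hV z' hz0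
    refine ⟨z', r, hz'x, hr.1, hr.2.1, ?_⟩
    have hrle : ∀ j, ‖m r y‖ ≤ (1/2) ^ j := by
      intro j
      have hle : r ≤ t j := hr.2.2 (t j) (htid j) (htz j)
      have hrt : r * t j = r := idem_mul_of_le hr.1 (htid j) hle
      calc ‖m r y‖ = ‖m r (m (t j) y)‖ := by rw [← m_mul_apply, hrt]
        _ ≤ ‖r‖ * ‖m (t j) y‖ := norm_m_apply_le m hm _ _
        _ ≤ 1 * (1/2) ^ j :=
            mul_le_mul (idem_norm_le_one hr.1) (hty j) (norm_nonneg _) zero_le_one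
        _ = (1/2) ^ j := one_mul _
    have : ‖m r y‖ ≤ 0 := by
      refine ge_of_tendsto (tendsto_pow_atTop_nhds_zero_of_lt_one (by norm_num) (by norm_num))
        (Eventually.of_forall hrle)
    simpa using norm_le_zero_iff.mp this

end Stmt7Aux

theorem stmt7 {K X : Type*} [TopologicalSpace K] [CompactSpace K] [T2Space K]
    [TotallyDisconnectedSpace K]
    [NormedAddCommGroup X] [NormedSpace ℝ X] [CompleteSpace X]
    (m : C(K, ℝ) →ₐ[ℝ] (X →L[ℝ] X))
    (hm : ∀ a : C(K, ℝ), ‖m a‖ = ‖a‖)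
    (x₀ : X) (hcyc : DenseRange fun a : C(K, ℝ) => m a x₀)
    (hVeksler : ∀ z : X, z ≠ 0 → ∃ e : C(K, ℝ), IsCarrier m z e)
    (x y : X) (xs ys : ℕ → X)
    (hx : Filter.Tendsto xs Filter.atTop (nhds x))
    (hy : Filter.Tendsto ys Filter.atTop (nhds y))
    (ex ey : C(K, ℝ)) (hex : IsCarrier m x ex) (hey : IsCarrier m y ey)
    (exs eys : ℕ → C(K, ℝ))
    (hexs : ∀ n, IsCarrier m (xs n) (exs n)) (heys : ∀ n, IsCarrier m (ys n) (eys n))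
    (hdisj : ∀ n, exs n * eys n = 0) :
    ex * ey = 0 := by
  classical
  by_cases hx0 : x = 0
  · subst hx0
    rw [Stmt7Aux.carrier_zero m hex, zero_mul]
  by_cases hy0 : y = 0
  · subst hy0
    rw [Stmt7Aux.carrier_zero m hey, mul_zero]
  have hxnorm : (0 : ℝ) < ‖x‖ := norm_pos_iff.mpr hx0
  set q : ℕ → C(K, ℝ) := exs with hqdef
  have hq : ∀ n, q n * q n = q n := fun n => (hexs n).1
  -- m (q n) x → x
  have hxs : Tendsto (fun n => ‖xs n - x‖) atTop (𝓝 0) :=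
    tendsto_iff_norm_sub_tendsto_zero.mp hx
  have hys : Tendsto (fun n => ‖ys n - y‖) atTop (𝓝 0) :=
    tendsto_iff_norm_sub_tendsto_zero.mp hy
  have hqx : Tendsto (fun n => m (q n) x) atTop (𝓝 x) := by
    rw [tendsto_iff_norm_sub_tendsto_zero]
    have hb : ∀ n, ‖m (q n) x - x‖ ≤ 2 * ‖xs n - x‖ := by
      intro n
      have h1 : m (q n) x - x = m (q n) (x - xs n) + (xs n - x) := by
        rw [map_sub, (hexs n).2.1]; abel
      rw [h1]
      calc ‖m (q n) (x - xs n) + (xs n - x)‖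
          ≤ ‖m (q n) (x - xs n)‖ + ‖xs n - x‖ := norm_add_le _ _
        _ ≤ ‖q n‖ * ‖x - xs n‖ + ‖xs n - x‖ := by
            have := Stmt7Aux.norm_m_apply_le m hm (q n) (x - xs n)
            linarith
        _ ≤ 1 * ‖x - xs n‖ + ‖xs n - x‖ := by
            have h2 := Stmt7Aux.idem_norm_le_one (hq n)
            have h3 : (0:ℝ) ≤ ‖x - xs n‖ := norm_nonneg _
            nlinarith
        _ = 2 * ‖xs n - x‖ := by rw [norm_sub_rev]; ring
    refine squeeze_zero (fun n => norm_nonneg _) hb ?_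
    simpa using hxs.const_mul 2
  have hqy : Tendsto (fun n => m (q n) y) atTop (𝓝 0) := by
    rw [tendsto_zero_iff_norm_tendsto_zero]
    have hb : ∀ n, ‖m (q n) y‖ ≤ ‖ys n - y‖ := by
      intro n
      have hzero : m (q n) (ys n) = 0 := by
        have : m (q n) (ys n) = m (q n * eys n) (ys n) := by
          rw [Stmt7Aux.m_mul_apply m, (heys n).2.1]
        rw [this, hqdef, hdisj n, map_zero]
        rfl
      have h1 : m (q n) y = m (q n) (y - ys n) := by
        rw [map_sub, hzero, sub_zero]
      rw [h1]
      calc ‖m (q n) (y - ys n)‖ ≤ ‖q n‖ * ‖y - ys n‖ := Stmt7Aux.norm_m_apply_le m hm _ _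
        _ ≤ 1 * ‖y - ys n‖ := by
            have h2 := Stmt7Aux.idem_norm_le_one (hq n)
            have h3 : (0:ℝ) ≤ ‖y - ys n‖ := norm_nonneg _
            nlinarith
        _ = ‖ys n - y‖ := by rw [one_mul, norm_sub_rev]
    exact squeeze_zero (fun n => norm_nonneg _) hb hys
  -- apply semiexact for each i
  have hsem : ∀ i : ℕ, ∃ (z' : X) (r : C(K, ℝ)),
      ‖z' - x‖ ≤ ‖x‖ / (2 * (i + 1)) ∧ r * r = r ∧ m r z' = z' ∧ m r y = 0 := by
    intro i
    exact Stmt7Aux.semiexact m hm hVeksler x y q hq hqx hqy (by positivity)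
  choose z' r hzx hr hrz hry using hsem
  have hzne : ∀ i, z' i ≠ 0 := by
    intro i h0
    have := hzx i
    rw [h0, zero_sub, norm_neg] at this
    have h1 : ‖x‖ / (2 * ((i:ℝ) + 1)) < ‖x‖ := by
      rw [div_lt_iff₀ (by positivity)]
      nlinarith [hxnorm]
    linarith
  have hz'x : Tendsto z' atTop (𝓝 x) := by
    rw [tendsto_iff_norm_sub_tendsto_zero]
    refine squeeze_zero (fun i => norm_nonneg _) hzx ?_
    have h1 : Tendsto (fun i : ℕ => ((i:ℝ) + 1)⁻¹) atTop (𝓝 0) :=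
      tendsto_inv_atTop_zero.comp (tendsto_atTop_add_const_right atTop 1 tendsto_natCast_atTop_atTop)
    have h2 : Tendsto (fun i : ℕ => ‖x‖ / 2 * ((i:ℝ) + 1)⁻¹) atTop (𝓝 0) := by
      simpa using h1.const_mul (‖x‖ / 2)
    refine h2.congr fun i => ?_
    field_simp
  have hkill : ∀ i, ey * r i = 0 := fun i => Stmt7Aux.kill m hey (hr i) (hry i)
  -- build c
  set f : ℕ → C(K, ℝ) := fun i => ((1/2 : ℝ) ^ (i + 1)) • r i with hfdef
  have hfs : Summable f := by
    refine Summable.of_norm_bounded (g := fun i => (1/2 : ℝ) ^ (i + 1)) ?_ ?_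
    · exact (summable_geometric_two.mul_right (1/2)).congr fun i => (pow_succ _ i).symm
    · intro i
      show ‖((1/2 : ℝ) ^ (i + 1)) • r i‖ ≤ (1/2 : ℝ) ^ (i + 1)
      calc ‖((1/2 : ℝ) ^ (i + 1)) • r i‖ = (1/2 : ℝ) ^ (i + 1) * ‖r i‖ := by
            rw [norm_smul (α := ℝ) (β := C(K,ℝ)), Real.norm_eq_abs,
              abs_of_pos (by positivity : (0:ℝ) < (1/2) ^ (i+1))]
        _ ≤ (1/2 : ℝ) ^ (i + 1) * 1 := by
            have h1 := Stmt7Aux.idem_norm_le_one (hr i)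
            have hp : (0:ℝ) ≤ (1/2 : ℝ) ^ (i + 1) := by positivity
            nlinarith [norm_nonneg (r i)]
        _ = (1/2 : ℝ) ^ (i + 1) := mul_one _
  set c : C(K, ℝ) := ∑' i, f i with hcdef
  have hcsum : HasSum f c := hfs.hasSum
  have hck : ∀ k : K, HasSum (fun i => f i k) (c k) := fun k =>
    ContinuousMap.hasSum_apply hcsum k
  have hfk_nonneg : ∀ (i : ℕ) (k : K), 0 ≤ f i k := by
    intro i k
    show (0:ℝ) ≤ ((1/2 : ℝ) ^ (i + 1) • r i) k
    have h : ((1/2 : ℝ) ^ (i + 1) • r i) k = (1/2 : ℝ) ^ (i + 1) * r i k := by simp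
    rw [h]
    rcases Stmt7Aux.idem_pt (hr i) k with h0 | h1
    · rw [h0, mul_zero]
    · rw [h1, mul_one]; positivity
  have heyc : ey * c = 0 := by
    have h1 : HasSum (fun i => ey * f i) (ey * c) :=
      hcsum.map (AddMonoidHom.mulLeft ey) (continuous_mul_left ey)
    have h2 : (fun i => ey * f i) = fun _ => (0 : C(K, ℝ)) := by
      funext i
      show ey * ((1/2 : ℝ) ^ (i + 1) • r i) = 0
      rw [mul_smul_comm, hkill i, smul_zero]
    rw [h2] at h1
    exact h1.unique hasSum_zero
  have hr0ne : r 0 ≠ 0 := by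
    intro h
    apply hzne 0
    rw [← hrz 0, h, map_zero]
    rfl
  obtain ⟨k₀, hk₀⟩ : ∃ k, r 0 k ≠ 0 := by
    by_contra h
    push_neg at h
    exact hr0ne (ContinuousMap.ext fun k => by simpa using h k)
  have hck₀pos : 0 < c k₀ := by
    have h1 : f 0 k₀ ≤ c k₀ := le_hasSum (hck k₀) 0 (fun j _ => hfk_nonneg j k₀)
    have h2 : r 0 k₀ = 1 := (Stmt7Aux.idem_pt (hr 0) k₀).resolve_left hk₀
    have h3 : f 0 k₀ = (1/2 : ℝ) ^ (0 + 1) * r 0 k₀ := by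
      show ((1/2 : ℝ) ^ (0 + 1) • r 0) k₀ = _
      simp
    rw [h3, h2, mul_one] at h1
    calc (0:ℝ) < (1/2 : ℝ) ^ (0 + 1) := by norm_num
      _ ≤ c k₀ := h1
  have hcne : c ≠ 0 := by
    intro h
    rw [h] at hck₀pos
    simp at hck₀pos
  have hvne : m c x₀ ≠ 0 := fun h => hcne (Stmt7Aux.minj m hm x₀ hcyc h)
  obtain ⟨R, hR⟩ := hVeksler (m c x₀) hvne
  have hRc : R * c = c := by
    have h0 : m (R * c - c) x₀ = 0 := by
      rw [map_sub, ContinuousLinearMap.sub_apply, Stmt7Aux.m_mul_apply m, hR.2.1, sub_self]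
    exact sub_eq_zero.mp (Stmt7Aux.minj m hm x₀ hcyc h0)
  have hRr : ∀ i, R * r i = r i := by
    intro i
    ext k
    show R k * r i k = r i k
    rcases Stmt7Aux.idem_pt (hr i) k with h0 | h1
    · rw [h0, mul_zero]
    · have hfi : (1/2 : ℝ) ^ (i + 1) ≤ c k := by
        have hh := le_hasSum (hck k) i (fun j _ => hfk_nonneg j k)
        have hfik : f i k = (1/2 : ℝ) ^ (i + 1) := by
          show ((1/2 : ℝ) ^ (i + 1) • r i) k = _
          simp [h1]
        rwa [hfik] at hh
      have hckpos : (0:ℝ) < c k := lt_of_lt_of_le (by positivity) hfi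
      have hRk : R k * c k = c k := by
        have hh := DFunLike.congr_fun hRc k
        simpa using hh
      have hR1 : R k = 1 := by
        rcases Stmt7Aux.idem_pt hR.1 k with hh | hh
        · exfalso
          rw [hh, zero_mul] at hRk
          exact absurd hRk.symm (ne_of_gt hckpos)
        · exact hh
      rw [hR1, one_mul]
  have hRzi : ∀ i, m R (z' i) = z' i := by
    intro i
    conv_lhs => rw [← hrz i]
    rw [← Stmt7Aux.m_mul_apply m, hRr i, hrz i]
  have hRx : m R x = x := by
    have h1 : Tendsto (fun i => m R (z' i)) atTop (𝓝 (m R x)) :=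
      ((m R).continuous.tendsto x).comp hz'x
    have h2 : Tendsto (fun i => m R (z' i)) atTop (𝓝 x) :=
      hz'x.congr fun i => (hRzi i).symm
    exact tendsto_nhds_unique h1 h2
  have hexR : ex ≤ R := hex.2.2 R hR.1 hRx
  have hRey : R * ey = 0 := by
    have hs : (R - R * ey) * (R - R * ey) = R - R * ey := by
      linear_combination ((1 - ey) * (1 - ey)) * hR.1 + R * hey.1
    have hsc : (R - R * ey) * c = c := by
      linear_combination hRc - R * heyc
    have hms : m (R - R * ey) (m c x₀) = m c x₀ := by
      rw [← Stmt7Aux.m_mul_apply m, hsc]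
    have hle := hR.2.2 _ hs hms
    ext k
    show (R * ey) k = 0
    have hk := ContinuousMap.le_def.mp hle k
    have hsk : (R - R * ey) k = R k - (R * ey) k := by simp
    rw [hsk] at hk
    rcases Stmt7Aux.idem_pt (Stmt7Aux.mul_idem hR.1 hey.1) k with h0 | h1
    · exact h0
    · exfalso; rw [h1] at hk; linarith
  ext k
  show ex k * ey k = (0 : C(K, ℝ)) k
  have h1 : ex k ≤ R k := ContinuousMap.le_def.mp hexR k
  have h3 : R k * ey k = 0 := by
    have := DFunLike.congr_fun hRey k
    simpa using this
  simp only [ContinuousMap.zero_apply]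
  rcases Stmt7Aux.idem_pt hex.1 k with h | h
  · rw [h, zero_mul]
  · rcases Stmt7Aux.idem_pt hey.1 k with g | g
    · rw [g, mul_zero]
    · exfalso
      rw [g, mul_one] at h3
      rw [h] at h1
      linarith
end

section
/- Every Kaplansky module over C(K) is a Veksler module: every nonzero element x admits a carrier projection e_x, the smallest idempotent e in C(K) with m(e)x = x. -/
open Filter Topology

/-- Kaplansky condition (2): for any `x` and any bounded-above nonempty family of
nonnegative functions annihilating `x`, the supremum of the family also annihilates `x`. -/
def IsKaplansky {K X : Type*} [TopologicalSpace K] [CompactSpace K] [T2Space K]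
    [NormedAddCommGroup X] [NormedSpace ℝ X] [CompleteSpace X]
    (m : C(K, ℝ) →ₐ[ℝ] (X →L[ℝ] X)) : Prop :=
  ∀ (x : X) (A : Set C(K, ℝ)), (∀ a ∈ A, 0 ≤ a) → A.Nonempty → BddAbove A →
    ∀ b : C(K, ℝ), IsLUB A b → (∀ a ∈ A, m a x = 0) → m b x = 0

/-- Every Kaplansky module is a Veksler module. -/
theorem stmt11 {K X : Type*} [TopologicalSpace K] [CompactSpace K] [T2Space K]
    [ExtremallyDisconnected K]
    [NormedAddCommGroup X] [NormedSpace ℝ X] [CompleteSpace X]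
    (m : C(K, ℝ) →ₐ[ℝ] (X →L[ℝ] X))
    (hm : ∀ a : C(K, ℝ), ‖m a‖ = ‖a‖)
    (hKap : IsKaplansky m) :
    ∀ x : X, x ≠ 0 → ∃ e : C(K, ℝ), IsCarrier m x e := by
  intro x _hx
  -- The open set where some annihilator of `x` is nonzero
  set U : Set K := {t | ∃ a : C(K, ℝ), m a x = 0 ∧ a t ≠ 0} with hU_def
  have hU_open : IsOpen U := by
    have : U = ⋃ a ∈ {a : C(K, ℝ) | m a x = 0}, {t | a t ≠ 0} := by
      ext t; simp only [hU_def, Set.mem_setOf_eq, Set.mem_iUnion, exists_prop]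
    rw [this]
    exact isOpen_biUnion fun a _ =>
      (isOpen_compl_singleton (x := (0 : ℝ))).preimage a.continuous
  set V : Set K := closure U with hV_def
  have hV_clopen : IsClopen V :=
    ⟨isClosed_closure, ExtremallyDisconnected.open_closure U hU_open⟩
  -- the indicator of V as a continuous map
  set b : C(K, ℝ) :=
    ⟨V.indicator fun _ => (1 : ℝ),
      continuous_indicator (by simp [hV_clopen.frontier_eq]) continuous_const.continuousOn⟩
    with hb_def
  have hb_mem : ∀ t, t ∈ V → b t = 1 := fun t ht => by
    simp only [hb_def, ContinuousMap.coe_mk]; exact Set.indicator_of_mem ht _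
  have hb_not : ∀ t, t ∉ V → b t = 0 := fun t ht => by
    simp only [hb_def, ContinuousMap.coe_mk]; exact Set.indicator_of_notMem ht _
  -- the annihilating family
  set A : Set C(K, ℝ) := {a | 0 ≤ a ∧ a ≤ 1 ∧ m a x = 0} with hA_def
  have h0A : (0 : C(K, ℝ)) ∈ A := ⟨le_refl 0, zero_le_one, by simp⟩
  have hApos : ∀ a ∈ A, (0 : C(K, ℝ)) ≤ a := fun a ha => ha.1
  have hAne : A.Nonempty := ⟨0, h0A⟩
  have hAbdd : BddAbove A := ⟨1, fun a ha => ha.2.1⟩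
  have hAann : ∀ a ∈ A, m a x = 0 := fun a ha => ha.2.2
  -- b is an upper bound of A
  have hub : b ∈ upperBounds A := by
    intro a ha
    rw [ContinuousMap.le_def]
    intro t
    by_cases ht : t ∈ V
    · rw [hb_mem t ht]
      exact (ContinuousMap.le_def.mp ha.2.1) t
    · have htU : t ∉ U := fun h => ht (subset_closure h)
      have hat : a t = 0 := by
        by_contra hne
        exact htU ⟨a, ha.2.2, hne⟩
      rw [hb_not t ht, hat]
  -- b is the least upper bound of A
  have hlub : IsLUB A b := by
    refine ⟨hub, ?_⟩
    intro c hc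
    have hc0 : (0 : C(K, ℝ)) ≤ c := hc h0A
    rw [ContinuousMap.le_def]
    intro t
    by_cases ht : t ∈ V
    · rw [hb_mem t ht]
      -- show c ≥ 1 on U, hence on V = closure U
      have hUc : U ⊆ {s | 1 ≤ c s} := by
        rintro s ⟨a, ha0, has⟩
        have hs0 : (0 : ℝ) < (a s) ^ 2 := by positivity
        -- the reciprocal of max (a z ^ 2) (a s ^ 2), a continuous function
        set r : C(K, ℝ) :=
          ⟨fun z => (max ((a z) ^ 2) ((a s) ^ 2))⁻¹, by
            apply Continuous.inv₀
            · exact (continuous_pow 2 |>.comp a.continuous).max continuous_const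
            · intro z
              exact ne_of_gt (lt_max_of_lt_right hs0)⟩ with hr_def
        set p : C(K, ℝ) := r * (a * a) with hp_def
        have hp_apply : ∀ z, p z = (max ((a z) ^ 2) ((a s) ^ 2))⁻¹ * ((a z) * (a z)) := by
          intro z; simp [hp_def, hr_def]
        have hpA : p ∈ A := by
          refine ⟨?_, ?_, ?_⟩
          · rw [ContinuousMap.le_def]
            intro z
            rw [ContinuousMap.zero_apply, hp_apply]
            have : (0:ℝ) ≤ (a z) * (a z) := mul_self_nonneg _
            positivity
          · rw [ContinuousMap.le_def]
            intro z
            rw [ContinuousMap.one_apply, hp_apply]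
            have hmax : (0:ℝ) < max ((a z) ^ 2) ((a s) ^ 2) := lt_max_of_lt_right hs0
            have h1 : (a z) * (a z) ≤ max ((a z) ^ 2) ((a s) ^ 2) := by
              nlinarith [le_max_left ((a z) ^ 2) ((a s) ^ 2)]
            calc (max ((a z) ^ 2) ((a s) ^ 2))⁻¹ * ((a z) * (a z))
                ≤ (max ((a z) ^ 2) ((a s) ^ 2))⁻¹ * (max ((a z) ^ 2) ((a s) ^ 2)) :=
                  mul_le_mul_of_nonneg_left h1 (by positivity)
              _ = 1 := inv_mul_cancel₀ (ne_of_gt hmax)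
          · rw [hp_def, map_mul, map_mul]
            simp [ha0]
        have : p s ≤ c s := (ContinuousMap.le_def.mp (hc hpA)) s
        have hps : p s = 1 := by
          rw [hp_apply, max_self]
          field_simp
        rw [hps] at this
        exact this
      have hclosed : IsClosed {s | 1 ≤ c s} :=
        isClosed_le continuous_const c.continuous
      exact closure_minimal hUc hclosed ht
    · rw [hb_not t ht]
      exact (ContinuousMap.le_def.mp hc0) t
  -- Kaplansky condition kills b
  have hbx : m b x = 0 := hKap x A hApos hAne hAbdd b hlub hAann
  -- b is idempotent
  have hbb : b * b = b := by
    ext z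
    rw [ContinuousMap.mul_apply]
    by_cases hz : z ∈ V
    · rw [hb_mem z hz]; ring
    · rw [hb_not z hz]; ring
  refine ⟨1 - b, ?_, ?_, ?_⟩
  · ext z
    have := ContinuousMap.congr_fun hbb z
    rw [ContinuousMap.mul_apply] at this
    simp only [ContinuousMap.mul_apply, ContinuousMap.sub_apply, ContinuousMap.one_apply]
    nlinarith [this]
  · rw [map_sub, map_one]
    simp [hbx]
  · intro f hf hfx
    have hf01 : ∀ z, f z = 0 ∨ f z = 1 := by
      intro z
      have := ContinuousMap.congr_fun hf z
      rw [ContinuousMap.mul_apply] at this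
      have h2 : f z * (f z - 1) = 0 := by linarith [this]
      rcases mul_eq_zero.mp h2 with h | h
      · exact Or.inl h
      · exact Or.inr (by linarith)
    have h1f : (1 : C(K, ℝ)) - f ∈ A := by
      refine ⟨?_, ?_, ?_⟩
      · rw [ContinuousMap.le_def]
        intro z
        simp only [ContinuousMap.zero_apply, ContinuousMap.sub_apply, ContinuousMap.one_apply]
        rcases hf01 z with h | h <;> rw [h] <;> norm_num
      · rw [ContinuousMap.le_def]
        intro z
        simp only [ContinuousMap.one_apply, ContinuousMap.sub_apply]
        rcases hf01 z with h | h <;> rw [h] <;> norm_num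
      · rw [map_sub, map_one]
        simp [hfx]
    have hle : (1 : C(K, ℝ)) - f ≤ b := hub h1f
    rw [ContinuousMap.le_def]
    intro z
    have hz := ContinuousMap.le_def.mp hle z
    simp only [ContinuousMap.sub_apply, ContinuousMap.one_apply] at hz ⊢
    linarith
end
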